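/- Let T, X > 0 and let f : ℝ² → ℝ be a measurable, non-negative and bounded function on R = [0,T] × [0,X] such that f(t,x) ≤ C₀ ∫₀ᵗ ∫₀ˣ f(s,a) da ds for all (t,x) ∈ R, where C₀ > 0. Then for every n ∈ ℕ and every (t,x) ∈ R, f(t,x) ≤ C₀ⁿ (t·x)ⁿ / (n!)² · sup_{(s,a) ∈ R} f(s,a). -/

import Mathlib

open MeasureTheory Set

/-- A measurable function bounded on `[0,x]` (with `0 ≤ x`) is interval integrable. -/
lemma measurable_bdd_intervalIntegrable {g : ℝ → ℝ} (hg : Measurable g) {x C : ℝ}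
    (hx : 0 ≤ x) (hb : ∀ a ∈ Icc (0 : ℝ) x, |g a| ≤ C) :
    IntervalIntegrable g volume 0 x := by
  rw [intervalIntegrable_iff_integrableOn_Ioc_of_le hx]
  have hc : IntegrableOn (fun _ : ℝ => C) (Ioc 0 x) volume :=
    integrableOn_const measure_Ioc_lt_top.ne
  refine hc.mono' hg.aestronglyMeasurable.restrict ?_
  refine (ae_restrict_iff' measurableSet_Ioc).mpr (ae_of_all _ fun a ha => ?_)
  simpa [Real.norm_eq_abs] using hb a (Ioc_subset_Icc_self ha)

/-- Iterating the two-parameter integral inequality `f(t,x) ≤ C₀ ∫₀ᵗ∫₀ˣ f` `n` times gives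
`f(t,x) ≤ C₀ⁿ (t·x)ⁿ/(n!)² · sup_{R} f` on `R = [0,T] × [0,X]`. -/
theorem two_parameter_gronwall_iterate
    (T X : ℝ) (hT : 0 < T) (hX : 0 < X) (f : ℝ × ℝ → ℝ) (hmeas : Measurable f)
    (hnonneg : ∀ t ∈ Icc (0 : ℝ) T, ∀ x ∈ Icc (0 : ℝ) X, 0 ≤ f (t, x))
    (hbdd : ∃ M : ℝ, ∀ t ∈ Icc (0 : ℝ) T, ∀ x ∈ Icc (0 : ℝ) X, f (t, x) ≤ M)
    (C₀ : ℝ) (hC₀ : 0 < C₀)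
    (hineq : ∀ t ∈ Icc (0 : ℝ) T, ∀ x ∈ Icc (0 : ℝ) X,
      f (t, x) ≤ C₀ * ∫ s in (0 : ℝ)..t, ∫ a in (0 : ℝ)..x, f (s, a)) :
    ∀ n : ℕ, ∀ t ∈ Icc (0 : ℝ) T, ∀ x ∈ Icc (0 : ℝ) X,
      f (t, x) ≤ C₀ ^ n * (t * x) ^ n / ((n.factorial : ℝ)) ^ 2
        * sSup (f '' Icc ((0 : ℝ), (0 : ℝ)) (T, X)) := by
  obtain ⟨M, hM⟩ := hbdd
  set S := sSup (f '' Icc ((0 : ℝ), (0 : ℝ)) (T, X)) with hSdef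
  have hmem : ∀ s ∈ Icc (0 : ℝ) T, ∀ a ∈ Icc (0 : ℝ) X,
      f (s, a) ∈ f '' Icc ((0 : ℝ), (0 : ℝ)) (T, X) := by
    intro s hs a ha
    exact ⟨(s, a), by simpa [Prod.le_def, Set.mem_Icc] using And.intro ⟨hs.1, ha.1⟩ ⟨hs.2, ha.2⟩, rfl⟩
  have hBdd : BddAbove (f '' Icc ((0 : ℝ), (0 : ℝ)) (T, X)) := by
    refine ⟨M, fun y hy => ?_⟩
    obtain ⟨p, hp, rfl⟩ := hy
    have hp' : p.1 ∈ Icc (0 : ℝ) T ∧ p.2 ∈ Icc (0 : ℝ) X := by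
      simpa [Prod.le_def, Set.mem_Icc, and_assoc, and_left_comm] using hp
    simpa using hM p.1 hp'.1 p.2 hp'.2
  have hfS : ∀ s ∈ Icc (0 : ℝ) T, ∀ a ∈ Icc (0 : ℝ) X, f (s, a) ≤ S :=
    fun s hs a ha => le_csSup hBdd (hmem s hs a ha)
  have h00 : (0 : ℝ) ∈ Icc (0 : ℝ) T := ⟨le_refl 0, hT.le⟩
  have h00' : (0 : ℝ) ∈ Icc (0 : ℝ) X := ⟨le_refl 0, hX.le⟩
  have hM0 : 0 ≤ M := (hnonneg 0 h00 0 h00').trans (hM 0 h00 0 h00')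
  have habs : ∀ s ∈ Icc (0 : ℝ) T, ∀ a ∈ Icc (0 : ℝ) X, |f (s, a)| ≤ M := by
    intro s hs a ha
    rw [abs_of_nonneg (hnonneg s hs a ha)]; exact hM s hs a ha
  intro n
  induction n with
  | zero => intro t ht x hx; simpa using hfS t ht x hx
  | succ n ih =>
    intro t ht x hx
    set K := C₀ ^ n / ((n.factorial : ℝ)) ^ 2 * S with hK
    have hIH : ∀ s ∈ Icc (0 : ℝ) t, ∀ a ∈ Icc (0 : ℝ) x, f (s, a) ≤ K * (s ^ n * a ^ n) := by
      intro s hs a ha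
      have hs' : s ∈ Icc (0 : ℝ) T := ⟨hs.1, hs.2.trans ht.2⟩
      have ha' : a ∈ Icc (0 : ℝ) X := ⟨ha.1, ha.2.trans hx.2⟩
      have := ih s hs' a ha'
      calc f (s, a) ≤ C₀ ^ n * (s * a) ^ n / ((n.factorial : ℝ)) ^ 2 * S := this
        _ = K * (s ^ n * a ^ n) := by rw [hK]; ring
    -- inner integrability of f
    have hinner_int : ∀ s ∈ Icc (0 : ℝ) T, IntervalIntegrable (fun a => f (s, a)) volume 0 x :=
      fun s hsT => measurable_bdd_intervalIntegrable (hmeas.comp measurable_prodMk_left) hx.1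
        (fun a ha => habs s hsT a ⟨ha.1, ha.2.trans hx.2⟩)
    -- the inner integral as a function of s
    set F : ℝ → ℝ := fun s => ∫ a in (0 : ℝ)..x, f (s, a) with hF
    have hFmeas : Measurable F := by
      have : ∀ s, F s = ∫ a in Ioc (0 : ℝ) x, f (s, a) := fun s =>
        intervalIntegral.integral_of_le hx.1
      rw [funext this]
      exact (hmeas.stronglyMeasurable.integral_prod_right' (ν := volume.restrict (Ioc 0 x))).measurable
    have hFabs : ∀ s ∈ Icc (0 : ℝ) t, |F s| ≤ M * |x - 0| := by
      intro s hs
      have hs' : s ∈ Icc (0 : ℝ) T := ⟨hs.1, hs.2.trans ht.2⟩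
      have := intervalIntegral.norm_integral_le_of_norm_le_const
        (f := fun a => f (s, a)) (a := (0:ℝ)) (b := x) (C := M) (fun a ha => by
          have ha' : a ∈ Ioc (0 : ℝ) x := by rwa [Set.uIoc_of_le hx.1] at ha
          simpa [Real.norm_eq_abs] using habs s hs' a ⟨ha'.1.le, ha'.2.trans hx.2⟩)
      simpa [Real.norm_eq_abs] using this
    have hFint : IntervalIntegrable F volume 0 t :=
      measurable_bdd_intervalIntegrable hFmeas ht.1 hFabs
    -- bound F pointwise by the polynomial
    have hFle : ∀ s ∈ Icc (0 : ℝ) t, F s ≤ K * s ^ n * (x ^ (n + 1) / (n + 1)) := by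
      intro s hs
      have hs' : s ∈ Icc (0 : ℝ) T := ⟨hs.1, hs.2.trans ht.2⟩
      have h1 : F s ≤ ∫ a in (0 : ℝ)..x, K * s ^ n * a ^ n := by
        refine intervalIntegral.integral_mono_on hx.1 (hinner_int s hs') ?_ ?_
        · exact (Continuous.intervalIntegrable (continuous_const.mul (continuous_pow n)) 0 x)
        · intro a ha
          have := hIH s hs a ha
          linarith [this]
      have h2 : (∫ a in (0 : ℝ)..x, K * s ^ n * a ^ n) = K * s ^ n * (x ^ (n + 1) / (n + 1)) := by
        rw [intervalIntegral.integral_const_mul, integral_pow]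
        ring
      linarith [h1, h2.le, h2.ge]
    -- outer integral bound
    have houter : (∫ s in (0 : ℝ)..t, F s)
        ≤ K * (t ^ (n + 1) / (n + 1)) * (x ^ (n + 1) / (n + 1)) := by
      have h1 : (∫ s in (0 : ℝ)..t, F s)
          ≤ ∫ s in (0 : ℝ)..t, K * (x ^ (n + 1) / (n + 1)) * s ^ n := by
        refine intervalIntegral.integral_mono_on ht.1 hFint
          (Continuous.intervalIntegrable (continuous_const.mul (continuous_pow n)) 0 t) ?_
        intro s hs
        have := hFle s hs
        linarith
      have h2 : (∫ s in (0 : ℝ)..t, K * (x ^ (n + 1) / (n + 1)) * s ^ n)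
          = K * (t ^ (n + 1) / (n + 1)) * (x ^ (n + 1) / (n + 1)) := by
        rw [intervalIntegral.integral_const_mul, integral_pow]
        ring
      linarith
    have hmain : f (t, x) ≤ C₀ * (K * (t ^ (n + 1) / (n + 1)) * (x ^ (n + 1) / (n + 1))) := by
      have := hineq t ht x hx
      have hmul := mul_le_mul_of_nonneg_left houter hC₀.le
      calc f (t, x) ≤ C₀ * ∫ s in (0 : ℝ)..t, F s := this
        _ ≤ _ := hmul
    refine hmain.trans (le_of_eq ?_)
    have hfac : ((n + 1).factorial : ℝ) = (n + 1) * (n.factorial : ℝ) := by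
      push_cast [Nat.factorial_succ]; ring
    have hnfac : (n.factorial : ℝ) ≠ 0 := Nat.cast_ne_zero.mpr n.factorial_ne_zero
    have hn1 : ((n : ℝ) + 1) ≠ 0 := by positivity
    rw [hK, hfac]
    field_simp
    ring
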